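/- Let A be an n×n Hermitian complex matrix with eigenvalues arranged in decreasing order λ₁(A) ≥ ... ≥ λₙ(A), and likewise for a Hermitian matrix B. Then for every k, |λₖ(A) - λₖ(B)| ≤ ‖A - B‖, where ‖·‖ is the operator norm. -/

import Mathlib

open Matrix

noncomputable section
variable {n : ℕ} {M : Matrix (Fin n) (Fin n) ℂ}

lemma clm_eigen (hM : M.IsHermitian) (i : Fin n) :
    toEuclideanCLM (𝕜 := ℂ) M (hM.eigenvectorBasis i) =
      (hM.eigenvalues i : ℂ) • hM.eigenvectorBasis i := by
  have h := hM.mulVec_eigenvectorBasis i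
  apply (WithLp.equiv 2 _).injective
  simp only [WithLp.equiv_apply, ofLp_toEuclideanCLM, toLin'_apply]
  ext j
  have := congrFun h j
  simpa [Matrix.mulVec] using this

lemma rayleigh_formula (hM : M.IsHermitian) (x : EuclideanSpace ℂ (Fin n)) :
    RCLike.re (inner ℂ x (toEuclideanCLM (𝕜 := ℂ) M x) : ℂ) =
      ∑ j, hM.eigenvalues j * ‖hM.eigenvectorBasis.repr x j‖ ^ 2 := by
  set b := hM.eigenvectorBasis
  have hsym : (toEuclideanLin M).IsSymmetric := (isHermitian_iff_isSymmetric).1 hM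
  have key : (inner ℂ x (toEuclideanCLM (𝕜 := ℂ) M x) : ℂ) =
      ∑ j, (hM.eigenvalues j : ℂ) * (‖b.repr x j‖ : ℂ) ^ 2 := by
    rw [← b.sum_inner_mul_inner x (toEuclideanCLM (𝕜 := ℂ) M x)]
    congr 1; funext j
    have hsym' : LinearMap.IsSymmetric ((toEuclideanCLM (𝕜 := ℂ) M : EuclideanSpace ℂ (Fin n) →L[ℂ] EuclideanSpace ℂ (Fin n)) : EuclideanSpace ℂ (Fin n) →ₗ[ℂ] EuclideanSpace ℂ (Fin n)) := by
      rw [coe_toEuclideanCLM_eq_toEuclideanLin]; exact hsym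
    have h1 : (inner ℂ (b j) (toEuclideanCLM (𝕜 := ℂ) M x) : ℂ)
        = inner ℂ (toEuclideanCLM (𝕜 := ℂ) M (b j)) x :=
      (hsym'.apply_clm (b j) x).symm
    rw [h1, clm_eigen hM j, inner_smul_left]
    have h2 : (inner ℂ x (b j) : ℂ) = starRingEnd ℂ (inner ℂ (b j) x) := by
      rw [← inner_conj_symm]
    rw [h2]
    have h3 : (inner ℂ (b j) x : ℂ) = b.repr x j := (b.repr_apply_apply x j).symm
    rw [h3]
    have h4 : starRingEnd ℂ (b.repr x j) * ((starRingEnd ℂ (hM.eigenvalues j : ℂ)) * b.repr x j)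
        = (hM.eigenvalues j : ℂ) * (starRingEnd ℂ (b.repr x j) * b.repr x j) := by
      rw [Complex.conj_ofReal]; ring
    rw [h4, RCLike.conj_mul]
    push_cast
    rfl
  rw [key]
  have : (∑ j, (hM.eigenvalues j : ℂ) * (‖b.repr x j‖ : ℂ) ^ 2)
      = ((∑ j, hM.eigenvalues j * ‖b.repr x j‖ ^ 2 : ℝ) : ℂ) := by push_cast; ring
  rw [this]; exact Complex.ofReal_re _

lemma repr_zero {E : Type*} [NormedAddCommGroup E] [InnerProductSpace ℂ E]
    {ι κ : Type*} [Fintype ι] (b : OrthonormalBasis ι ℂ E) (v : κ → ι)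
    {x : E} (hx : x ∈ Submodule.span ℂ (Set.range (fun i => b (v i))))
    {j : ι} (hj : ∀ i, v i ≠ j) : b.repr x j = 0 := by
  rw [b.repr_apply_apply]
  induction hx using Submodule.span_induction with
  | mem y hy =>
    obtain ⟨i, rfl⟩ := hy
    simpa using b.orthonormal.2 (Ne.symm (hj i))
  | zero => simp
  | add y z _ _ hy hz => rw [inner_add_right, hy, hz, add_zero]
  | smul c y _ hy => rw [inner_smul_right, hy, mul_zero]

lemma norm_sq_repr {E : Type*} [NormedAddCommGroup E] [InnerProductSpace ℂ E]
    {ι : Type*} [Fintype ι] (b : OrthonormalBasis ι ℂ E) (x : E) :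
    ‖x‖ ^ 2 = ∑ j, ‖b.repr x j‖ ^ 2 := by
  rw [← b.repr.norm_map x, EuclideanSpace.norm_eq,
    Real.sq_sqrt (Finset.sum_nonneg fun j _ => sq_nonneg _)]

lemma lower_bound (hM : M.IsHermitian) {κ : Type*} (v : κ → Fin n) (c : ℝ)
    (hc : ∀ i, c ≤ hM.eigenvalues (v i)) {x : EuclideanSpace ℂ (Fin n)}
    (hx : x ∈ Submodule.span ℂ (Set.range (fun i => hM.eigenvectorBasis (v i)))) :
    c * ‖x‖ ^ 2 ≤ RCLike.re (inner ℂ x (toEuclideanCLM (𝕜 := ℂ) M x) : ℂ) := by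
  rw [rayleigh_formula hM x, norm_sq_repr hM.eigenvectorBasis x, Finset.mul_sum]
  apply Finset.sum_le_sum
  intro j _
  by_cases h : ∀ i, v i ≠ j
  · rw [repr_zero hM.eigenvectorBasis v hx h]; simp
  · push_neg at h
    obtain ⟨i, rfl⟩ := h
    exact mul_le_mul_of_nonneg_right (hc i) (sq_nonneg _)

lemma upper_bound (hM : M.IsHermitian) {κ : Type*} (v : κ → Fin n) (c : ℝ)
    (hc : ∀ i, hM.eigenvalues (v i) ≤ c) {x : EuclideanSpace ℂ (Fin n)}
    (hx : x ∈ Submodule.span ℂ (Set.range (fun i => hM.eigenvectorBasis (v i)))) :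
    RCLike.re (inner ℂ x (toEuclideanCLM (𝕜 := ℂ) M x) : ℂ) ≤ c * ‖x‖ ^ 2 := by
  rw [rayleigh_formula hM x, norm_sq_repr hM.eigenvectorBasis x, Finset.mul_sum]
  apply Finset.sum_le_sum
  intro j _
  by_cases h : ∀ i, v i ≠ j
  · rw [repr_zero hM.eigenvectorBasis v hx h]; simp
  · push_neg at h
    obtain ⟨i, rfl⟩ := h
    exact mul_le_mul_of_nonneg_right (hc i) (sq_nonneg _)

lemma weyl_one_side {n : ℕ} (A B : Matrix (Fin n) (Fin n) ℂ)
    (hA : A.IsHermitian) (hB : B.IsHermitian)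
    (lamA lamB : Fin n → ℝ) (hlamA : Antitone lamA) (hlamB : Antitone lamB)
    (henumA : ∃ σ : Equiv.Perm (Fin n), ∀ i, lamA i = hA.eigenvalues (σ i))
    (henumB : ∃ σ : Equiv.Perm (Fin n), ∀ i, lamB i = hB.eigenvalues (σ i))
    (k : Fin n) :
    lamA k - lamB k ≤ ‖Matrix.toEuclideanCLM (𝕜 := ℂ) (A - B)‖ := by
  obtain ⟨σ, hσ⟩ := henumA
  obtain ⟨τ, hτ⟩ := henumB
  set vA : Set.Iic k → Fin n := fun i => σ i.1 with hvA
  set vB : Set.Ici k → Fin n := fun j => τ j.1 with hvB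
  set S := Submodule.span ℂ (Set.range (fun i => hA.eigenvectorBasis (vA i))) with hS
  set T := Submodule.span ℂ (Set.range (fun j => hB.eigenvectorBasis (vB j))) with hT
  have hnpos : 0 < n := k.pos
  have hliA : LinearIndependent ℂ (fun i : Set.Iic k => hA.eigenvectorBasis (vA i)) :=
    hA.eigenvectorBasis.orthonormal.linearIndependent.comp _
      (σ.injective.comp Subtype.val_injective)
  have hSdim : Module.finrank ℂ S = (k : ℕ) + 1 := by
    rw [hS, finrank_span_eq_card hliA, Fintype.card_Iic, Fin.card_Iic]
  have hliB : LinearIndependent ℂ (fun j : Set.Ici k => hB.eigenvectorBasis (vB j)) :=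
    hB.eigenvectorBasis.orthonormal.linearIndependent.comp _
      (τ.injective.comp Subtype.val_injective)
  have hTdim : Module.finrank ℂ T = n - (k : ℕ) := by
    rw [hT, finrank_span_eq_card hliB, Fintype.card_Ici, Fin.card_Ici]
  have hsum := Submodule.finrank_sup_add_finrank_inf_eq S T
  have hSTle : Module.finrank ℂ ↥(S ⊔ T) ≤ n := by
    simpa [finrank_euclideanSpace] using Submodule.finrank_le (S ⊔ T)
  have hinf : 0 < Module.finrank ℂ ↥(S ⊓ T) := by
    have hk : (k : ℕ) < n := k.2
    omega
  have hne : S ⊓ T ≠ ⊥ := by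
    intro h
    rw [h, finrank_bot] at hinf
    exact lt_irrefl 0 hinf
  obtain ⟨x, hxmem, hx0⟩ := Submodule.exists_mem_ne_zero_of_ne_bot hne
  have hxn : (0 : ℝ) < ‖x‖ ^ 2 := by
    have hx0' : (0 : ℝ) < ‖x‖ := norm_pos_iff.mpr hx0
    positivity
  have h1 : lamA k * ‖x‖ ^ 2 ≤ RCLike.re (inner ℂ x (toEuclideanCLM (𝕜 := ℂ) A x) : ℂ) :=
    lower_bound hA vA (lamA k)
      (fun i => by rw [← hσ i.1]; exact hlamA i.2) hxmem.1
  have h2 : RCLike.re (inner ℂ x (toEuclideanCLM (𝕜 := ℂ) B x) : ℂ) ≤ lamB k * ‖x‖ ^ 2 :=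
    upper_bound hB vB (lamB k)
      (fun j => by rw [← hτ j.1]; exact hlamB j.2) hxmem.2
  have h3 : RCLike.re (inner ℂ x (toEuclideanCLM (𝕜 := ℂ) (A - B) x) : ℂ)
      = RCLike.re (inner ℂ x (toEuclideanCLM (𝕜 := ℂ) A x) : ℂ)
        - RCLike.re (inner ℂ x (toEuclideanCLM (𝕜 := ℂ) B x) : ℂ) := by
    rw [map_sub, ContinuousLinearMap.sub_apply, inner_sub_right, map_sub]
  have h4 : RCLike.re (inner ℂ x (toEuclideanCLM (𝕜 := ℂ) (A - B) x) : ℂ)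
      ≤ ‖Matrix.toEuclideanCLM (𝕜 := ℂ) (A - B)‖ * ‖x‖ ^ 2 := by
    calc RCLike.re (inner ℂ x (toEuclideanCLM (𝕜 := ℂ) (A - B) x) : ℂ)
        ≤ ‖(inner ℂ x (toEuclideanCLM (𝕜 := ℂ) (A - B) x) : ℂ)‖ := RCLike.re_le_norm _
      _ ≤ ‖x‖ * ‖toEuclideanCLM (𝕜 := ℂ) (A - B) x‖ := norm_inner_le_norm _ _
      _ ≤ ‖x‖ * (‖Matrix.toEuclideanCLM (𝕜 := ℂ) (A - B)‖ * ‖x‖) :=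
          mul_le_mul_of_nonneg_left ((toEuclideanCLM (𝕜 := ℂ) (A - B)).le_opNorm x)
            (norm_nonneg x)
      _ = ‖Matrix.toEuclideanCLM (𝕜 := ℂ) (A - B)‖ * ‖x‖ ^ 2 := by ring
  nlinarith [h1, h2, h3, h4]

end

theorem stmt_3 {n : ℕ} (A B : Matrix (Fin n) (Fin n) ℂ)
    (hA : A.IsHermitian) (hB : B.IsHermitian)
    (lamA lamB : Fin n → ℝ) (hlamA : Antitone lamA) (hlamB : Antitone lamB)
    (henumA : ∃ σ : Equiv.Perm (Fin n), ∀ i, lamA i = hA.eigenvalues (σ i))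
    (henumB : ∃ σ : Equiv.Perm (Fin n), ∀ i, lamB i = hB.eigenvalues (σ i)) :
    ∀ k : Fin n, |lamA k - lamB k| ≤ ‖Matrix.toEuclideanCLM (𝕜 := ℂ) (A - B)‖ := by
  intro k
  rw [abs_sub_le_iff]
  constructor
  · exact weyl_one_side A B hA hB lamA lamB hlamA hlamB henumA henumB k
  · have h := weyl_one_side B A hB hA lamB lamA hlamB hlamA henumB henumA k
    have hnorm : ‖Matrix.toEuclideanCLM (𝕜 := ℂ) (B - A)‖
        = ‖Matrix.toEuclideanCLM (𝕜 := ℂ) (A - B)‖ := by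
      rw [show B - A = -(A - B) by rw [neg_sub], map_neg, norm_neg]
    rwa [hnorm] at h
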